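/- Let U ⊆ ℝⁿ be a convex open set, r ≥ n, A : U → (ℝⁿ →ₗ[ℝ] ℝʳ →ₗ[ℝ] ℝʳ) a smooth connection form, and Φ : U → (ℝⁿ →ₗ[ℝ] ℝʳ) a smooth bundle map. Assume: (1) there is a smooth parallel frame, i.e. a smooth map e : U → (ℝʳ →ₗ[ℝ] ℝʳ) with e x invertible for every x and fderiv ℝ e x v + (A x v) ∘ (e x) = 0 for all x ∈ U, v ∈ ℝⁿ; (2) A is relatively torsion-free with respect to Φ, i.e. for all x ∈ U and v, w ∈ ℝⁿ: fderiv ℝ (fun y ↦ Φ y w) x v + A x v (Φ x w) = fderiv ℝ (fun y ↦ Φ y v) x w + A x w (Φ x v). Then there exists a smooth map f : U → ℝʳ such that fderiv ℝ f x = (e x)⁻¹ ∘ (Φ x) for every x ∈ U; in particular, if Φ x is injective for every x, then f is an immersion. (Paper's Proposition 4.2, via the Poincaré lemma, in a trivialization with a chosen parallel frame.) -/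

import Mathlib

noncomputable section

open Set

section AuxPoincare

open Metric

variable {H E : Type*} [NormedAddCommGroup H] [NormedSpace ℝ H]
  [NormedAddCommGroup E] [NormedSpace ℝ E] [CompleteSpace E]
  [MeasurableSpace H] [OpensMeasurableSpace H] [SecondCountableTopology H] [ProperSpace H]

/-- Poincaré lemma for closed smooth 1-forms on a convex open set. -/
theorem poincare1 {U : Set H} (hUopen : IsOpen U) (hUconv : Convex ℝ U)
    (θ : H → (H →L[ℝ] E)) (hθ : ContDiffOn ℝ (⊤:ℕ∞) θ U)
    (hsym : ∀ x ∈ U, ∀ v w : H, fderiv ℝ θ x v w = fderiv ℝ θ x w v) :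
    ∃ f : H → E, ContDiffOn ℝ (⊤:ℕ∞) f U ∧ ∀ x ∈ U, HasFDerivAt f (θ x) x := by
  rcases U.eq_empty_or_nonempty with rfl | ⟨x₀, hx₀⟩
  · exact ⟨0, fun x hx => absurd hx (notMem_empty x), fun x hx => absurd hx (notMem_empty x)⟩
  haveI : SecondCountableTopologyEither ℝ (H →L[ℝ] E) := ⟨Or.inl inferInstance⟩
  have hone : ((⊤:ℕ∞) : WithTop ℕ∞) ≠ 0 := by simp
  have hθ' : ContDiffOn ℝ (⊤:ℕ∞) (fderiv ℝ θ) U := hθ.fderiv_of_isOpen hUopen le_rfl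
  have hθc : ContinuousOn θ U := hθ.continuousOn
  have hθ'c : ContinuousOn (fderiv ℝ θ) U := hθ'.continuousOn
  set f : H → E := fun x => ∫ t in (0:ℝ)..1, θ (x₀ + t • (x - x₀)) (x - x₀) with hf
  have key : ∀ x ∈ U, HasFDerivAt f (θ x) x := by
    intro x hx
    -- the segment and a compact thickening inside U
    have hseg : segment ℝ x₀ x ⊆ U := hUconv.segment_subset hx₀ hx
    have hsegcomp : IsCompact (segment ℝ x₀ x) := by
      rw [segment_eq_image']
      exact (isCompact_Icc.image (by fun_prop))
    obtain ⟨δ, δpos, hδ⟩ := hsegcomp.exists_cthickening_subset_open hUopen hseg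
    set V : Set H := cthickening δ (segment ℝ x₀ x) with hV
    have hVcomp : IsCompact V := hsegcomp.cthickening
    have hVU : V ⊆ U := hδ
    have hmemV : ∀ t ∈ Icc (0:ℝ) 1, ∀ y ∈ closedBall x δ, x₀ + t • (y - x₀) ∈ V := by
      intro t ht y hy
      have h1 : x₀ + t • (x - x₀) ∈ segment ℝ x₀ x := by
        rw [segment_eq_image']
        exact ⟨t, ht, rfl⟩
      refine mem_cthickening_of_dist_le _ _ δ _ h1 ?_
      have : dist (x₀ + t • (y - x₀)) (x₀ + t • (x - x₀)) = t * dist y x := by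
        rw [dist_eq_norm]
        have h2 : (x₀ + t • (y - x₀)) - (x₀ + t • (x - x₀)) = t • (y - x) := by module
        rw [h2, norm_smul, Real.norm_eq_abs, abs_of_nonneg ht.1, dist_eq_norm]
      rw [this]
      calc t * dist y x ≤ 1 * δ := by
            have := mem_closedBall.mp hy
            exact mul_le_mul ht.2 this dist_nonneg zero_le_one
        _ = δ := one_mul δ
    -- bounds on V
    obtain ⟨M₁, hM₁⟩ := hVcomp.exists_bound_of_continuousOn (hθc.mono hVU)
    obtain ⟨M₂, hM₂⟩ := hVcomp.exists_bound_of_continuousOn (f := fderiv ℝ θ) (hθ'c.mono hVU)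
    have hM₁0 : 0 ≤ M₁ := le_trans (norm_nonneg _) (hM₁ _ (self_subset_cthickening _ (left_mem_segment ℝ x₀ x)))
    have hM₂0 : 0 ≤ M₂ := le_trans (norm_nonneg _) (hM₂ _ (self_subset_cthickening _ (left_mem_segment ℝ x₀ x)))
    -- setup
    set γ : ℝ → H := fun t => x₀ + t • (x - x₀) with hγdef
    have hγU : ∀ t ∈ Icc (0:ℝ) 1, γ t ∈ U := fun t ht =>
      hVU (hmemV t ht x (mem_closedBall_self δpos.le))
    set F : H → ℝ → E := fun y t => θ (x₀ + t • (y - x₀)) (y - x₀) with hFdef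
    set F' : H → ℝ → (H →L[ℝ] E) := fun y t =>
      θ (x₀ + t • (y - x₀)) + t • ((fderiv ℝ θ (x₀ + t • (y - x₀))).flip (y - x₀)) with hF'def
    have hmemU : ∀ t ∈ Icc (0:ℝ) 1, ∀ y ∈ closedBall x δ, x₀ + t • (y - x₀) ∈ U :=
      fun t ht y hy => hVU (hmemV t ht y hy)
    have haff : ∀ y : H, Continuous (fun t : ℝ => x₀ + t • (y - x₀)) := by fun_prop
    have hFcont : ∀ y ∈ closedBall x δ, ContinuousOn (F y) (Icc (0:ℝ) 1) := by
      intro y hy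
      exact ContinuousOn.clm_apply
        (hθc.comp (haff y).continuousOn (fun t ht => hmemU t ht y hy)) continuousOn_const
    have hF'cont : ∀ y ∈ closedBall x δ, ContinuousOn (F' y) (Icc (0:ℝ) 1) := by
      intro y hy
      apply ContinuousOn.add
      · exact hθc.comp (haff y).continuousOn (fun t ht => hmemU t ht y hy)
      · apply ContinuousOn.smul continuousOn_id
        exact ContinuousOn.clm_apply
          ((ContinuousLinearMap.flipₗᵢ ℝ H H E).continuous.comp_continuousOn
            (hθ'c.comp (haff y).continuousOn (fun t ht => hmemU t ht y hy)))
          continuousOn_const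
    have hIoc : Set.uIoc (0:ℝ) 1 = Ioc 0 1 := uIoc_of_le zero_le_one
    have hIcc : uIcc (0:ℝ) 1 = Icc 0 1 := uIcc_of_le zero_le_one
    have hF_meas : ∀ᶠ y in nhds x,
        MeasureTheory.AEStronglyMeasurable (F y) (MeasureTheory.volume.restrict (Set.uIoc (0:ℝ) 1)) := by
      filter_upwards [ball_mem_nhds x δpos] with y hy
      rw [hIoc]
      exact ((hFcont y (ball_subset_closedBall hy)).mono Ioc_subset_Icc_self).aestronglyMeasurable
        measurableSet_Ioc
    have hF_int : IntervalIntegrable (F x) MeasureTheory.volume 0 1 := by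
      apply ContinuousOn.intervalIntegrable
      rw [hIcc]
      exact hFcont x (mem_closedBall_self δpos.le)
    have hF'_meas : MeasureTheory.AEStronglyMeasurable (F' x)
        (MeasureTheory.volume.restrict (Set.uIoc (0:ℝ) 1)) := by
      rw [hIoc]
      exact ((hF'cont x (mem_closedBall_self δpos.le)).mono Ioc_subset_Icc_self).aestronglyMeasurable
        measurableSet_Ioc
    have h_bound : ∀ᵐ t ∂MeasureTheory.volume, t ∈ Set.uIoc (0:ℝ) 1 → ∀ y ∈ ball x δ,
        ‖F' y t‖ ≤ M₁ + M₂ * (δ + ‖x - x₀‖) := by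
      apply MeasureTheory.ae_of_all
      intro t ht y hy
      have ht' : t ∈ Icc (0:ℝ) 1 := by rw [hIoc] at ht; exact ⟨ht.1.le, ht.2⟩
      have hzV : x₀ + t • (y - x₀) ∈ V := hmemV t ht' y (ball_subset_closedBall hy)
      have hyb : ‖y - x₀‖ ≤ δ + ‖x - x₀‖ := by
        calc ‖y - x₀‖ ≤ ‖y - x‖ + ‖x - x₀‖ := norm_sub_le_norm_sub_add_norm_sub y x x₀
          _ ≤ δ + ‖x - x₀‖ := by
              have := mem_closedBall.mp (ball_subset_closedBall hy)
              rw [dist_eq_norm] at this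
              linarith
      have h1 : ‖θ (x₀ + t • (y - x₀))‖ ≤ M₁ := hM₁ _ hzV
      have h2 : ‖t • ((fderiv ℝ θ (x₀ + t • (y - x₀))).flip (y - x₀))‖ ≤ M₂ * (δ + ‖x - x₀‖) := by
        have hns := norm_smul t ((fderiv ℝ θ (x₀ + t • (y - x₀))).flip (y - x₀))
        rw [hns, Real.norm_eq_abs, abs_of_nonneg ht'.1]
        calc t * ‖(fderiv ℝ θ (x₀ + t • (y - x₀))).flip (y - x₀)‖
            ≤ 1 * (‖(fderiv ℝ θ (x₀ + t • (y - x₀))).flip‖ * ‖y - x₀‖) := by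
              apply mul_le_mul ht'.2 (ContinuousLinearMap.le_opNorm _ _) (norm_nonneg _) zero_le_one
          _ = ‖fderiv ℝ θ (x₀ + t • (y - x₀))‖ * ‖y - x₀‖ := by
              rw [one_mul, ContinuousLinearMap.opNorm_flip]
          _ ≤ M₂ * (δ + ‖x - x₀‖) :=
              mul_le_mul (hM₂ _ hzV) hyb (norm_nonneg _) hM₂0
      calc ‖F' y t‖ ≤ ‖θ (x₀ + t • (y - x₀))‖
            + ‖t • ((fderiv ℝ θ (x₀ + t • (y - x₀))).flip (y - x₀))‖ := norm_add_le _ _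
        _ ≤ M₁ + M₂ * (δ + ‖x - x₀‖) := add_le_add h1 h2
    have bound_int : IntervalIntegrable (fun _ : ℝ => M₁ + M₂ * (δ + ‖x - x₀‖))
        MeasureTheory.volume 0 1 := intervalIntegrable_const
    have h_diff : ∀ᵐ t ∂MeasureTheory.volume, t ∈ Set.uIoc (0:ℝ) 1 → ∀ y ∈ ball x δ,
        HasFDerivAt (fun y' => F y' t) (F' y t) y := by
      apply MeasureTheory.ae_of_all
      intro t ht y hy
      have ht' : t ∈ Icc (0:ℝ) 1 := by rw [hIoc] at ht; exact ⟨ht.1.le, ht.2⟩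
      set z := x₀ + t • (y - x₀) with hzdef
      have hzU : z ∈ U := hmemU t ht' y (ball_subset_closedBall hy)
      have hθz : HasFDerivAt θ (fderiv ℝ θ z) z :=
        ((hθ.contDiffAt (hUopen.mem_nhds hzU)).differentiableAt hone).hasFDerivAt
      have hg : HasFDerivAt (fun y' : H => x₀ + t • (y' - x₀))
          (t • ContinuousLinearMap.id ℝ H) y :=
        (((hasFDerivAt_id y).sub_const x₀).const_smul t).const_add x₀
      have hc : HasFDerivAt (fun y' => θ (x₀ + t • (y' - x₀)))
          ((fderiv ℝ θ z).comp (t • ContinuousLinearMap.id ℝ H)) y := hθz.comp y hg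
      have hu : HasFDerivAt (fun y' : H => y' - x₀) (ContinuousLinearMap.id ℝ H) y :=
        (hasFDerivAt_id y).sub_const x₀
      have hca := hc.clm_apply hu
      convert hca using 1
      ext v
      simp only [hF'def, ContinuousLinearMap.add_apply, ContinuousLinearMap.smul_apply,
        ContinuousLinearMap.flip_apply, ContinuousLinearMap.coe_comp',
        ContinuousLinearMap.coe_id', Function.comp_apply, id_eq, ← hzdef]
      rw [map_smul, ContinuousLinearMap.smul_apply]
    have HH := intervalIntegral.hasFDerivAt_integral_of_dominated_of_fderiv_le (ball_mem_nhds x δpos) hF_meas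
      hF_int hF'_meas h_bound bound_int h_diff
    have hval : (∫ t in (0:ℝ)..1, F' x t) = θ x := by
      have hderivs : ∀ t ∈ uIcc (0:ℝ) 1, HasDerivAt (fun s => s • θ (γ s)) (F' x t) t := by
        intro t ht
        rw [hIcc] at ht
        have hzU : γ t ∈ U := hγU t ht
        have hθz : HasFDerivAt θ (fderiv ℝ θ (γ t)) (γ t) :=
          ((hθ.contDiffAt (hUopen.mem_nhds hzU)).differentiableAt hone).hasFDerivAt
        have hγ' : HasDerivAt γ (x - x₀) t := by
          have h := ((hasDerivAt_id t).smul_const (x - x₀)).const_add x₀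
          simpa [hγdef] using h
        have h2 : HasDerivAt (fun s => θ (γ s)) (fderiv ℝ θ (γ t) (x - x₀)) t :=
          (hθz.comp_hasDerivAt t hγ')
        have h3 := (hasDerivAt_id t).smul h2
        refine h3.congr_deriv ?_
        ext v
        simp only [hF'def, hγdef, ContinuousLinearMap.add_apply, ContinuousLinearMap.smul_apply,
          ContinuousLinearMap.flip_apply, one_smul, smul_eq_mul, id_eq]
        rw [hsym _ hzU v (x - x₀)]
        abel
      have hint : IntervalIntegrable (F' x) MeasureTheory.volume 0 1 := by
        apply ContinuousOn.intervalIntegrable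
        rw [hIcc]
        exact hF'cont x (mem_closedBall_self δpos.le)
      have heq := intervalIntegral.integral_eq_sub_of_hasDerivAt hderivs hint
      rw [heq]
      have hγ1 : γ 1 = x := by simp [hγdef]
      have hγ0 : γ 0 = x₀ := by simp [hγdef]
      rw [hγ1, hγ0, one_smul, zero_smul, sub_zero]
    rw [hval] at HH
    exact HH
  refine ⟨f, ?_, key⟩
  rw [contDiffOn_infty_iff_fderiv_of_isOpen hUopen]
  exact ⟨fun y hy => (key y hy).differentiableAt.differentiableWithinAt,
    hθ.congr fun y hy => (key y hy).fderiv⟩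

end AuxPoincare

/-- Paper's Proposition 4.2 (in a trivialization with a chosen parallel frame):
on a convex open `U ⊆ ℝⁿ`, if the connection with connection form `A` on the
trivial bundle `U × ℝʳ` admits a smooth parallel frame `e`, and `A` is relatively
torsion-free with respect to the bundle map `Φ : TU → U × ℝʳ`, then there is a
smooth map `f : U → ℝʳ` with `fderiv ℝ f x = (e x)⁻¹ ∘ Φ x` (expressed as
`(e x) ∘ (fderiv ℝ f x) = Φ x`) for all `x ∈ U`; in particular if every `Φ x` is
injective then `f` is an immersion. -/
theorem statement19 {n r : ℕ} (hr : n ≤ r)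
    (U : Set (Fin n → ℝ)) (hUopen : IsOpen U) (hUconv : Convex ℝ U)
    (A : (Fin n → ℝ) → ((Fin n → ℝ) →L[ℝ] (Fin r → ℝ) →L[ℝ] (Fin r → ℝ)))
    (hAsmooth : ContDiffOn ℝ (⊤ : ℕ∞) A U)
    (Φ : (Fin n → ℝ) → ((Fin n → ℝ) →L[ℝ] (Fin r → ℝ)))
    (hΦsmooth : ContDiffOn ℝ (⊤ : ℕ∞) Φ U)
    -- (1) a smooth parallel frame
    (e : (Fin n → ℝ) → ((Fin r → ℝ) →L[ℝ] (Fin r → ℝ)))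
    (hesmooth : ContDiffOn ℝ (⊤ : ℕ∞) e U)
    (hebij : ∀ x ∈ U, Function.Bijective (e x))
    (hepar : ∀ x ∈ U, ∀ v : Fin n → ℝ,
      fderiv ℝ e x v + (A x v).comp (e x) = 0)
    -- (2) A is relatively torsion-free with respect to Φ
    (htf : ∀ x ∈ U, ∀ v w : Fin n → ℝ,
      fderiv ℝ (fun y => Φ y w) x v + A x v (Φ x w)
        = fderiv ℝ (fun y => Φ y v) x w + A x w (Φ x v)) :
    ∃ f : (Fin n → ℝ) → (Fin r → ℝ),
      ContDiffOn ℝ (⊤ : ℕ∞) f U ∧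
      (∀ x ∈ U, (e x).comp (fderiv ℝ f x) = Φ x) ∧
      ((∀ x ∈ U, Function.Injective (Φ x)) →
        ∀ x ∈ U, Function.Injective (fderiv ℝ f x)) := by
  have hone : ((⊤:ℕ∞) : WithTop ℕ∞) ≠ 0 := by simp
  have hunit : ∀ x ∈ U, IsUnit (e x) := fun x hx =>
    ContinuousLinearMap.isUnit_iff_bijective.mpr (hebij x hx)
  set θ : (Fin n → ℝ) → ((Fin n → ℝ) →L[ℝ] (Fin r → ℝ)) :=
    fun x => (Ring.inverse (e x)).comp (Φ x) with hθdef
  have hecomp : ∀ x ∈ U, (e x).comp (Ring.inverse (e x)) = ContinuousLinearMap.id ℝ _ := by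
    intro x hx
    have h := Ring.mul_inverse_cancel (e x) (hunit x hx)
    rwa [ContinuousLinearMap.mul_def, ContinuousLinearMap.one_def] at h
  have heθ : ∀ x ∈ U, (e x).comp (θ x) = Φ x := by
    intro x hx
    rw [hθdef, ← ContinuousLinearMap.comp_assoc, hecomp x hx, ContinuousLinearMap.id_comp]
  have heθ' : ∀ x ∈ U, ∀ w, e x (θ x w) = Φ x w := by
    intro x hx w
    have := heθ x hx
    rw [ContinuousLinearMap.ext_iff] at this
    simpa using this w
  have hθsmooth : ContDiffOn ℝ (⊤:ℕ∞) θ U := by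
    intro x hx
    have hinv : ContDiffAt ℝ (⊤:ℕ∞) (fun y => Ring.inverse (e y)) x := by
      have h1 : ContDiffAt ℝ (⊤:ℕ∞) Ring.inverse (e x) := by
        have := contDiffAt_ringInverse ℝ (n := (⊤:ℕ∞)) ((hunit x hx).unit)
        rwa [IsUnit.unit_spec] at this
      exact h1.comp x (hesmooth.contDiffAt (hUopen.mem_nhds hx))
    exact ((hinv.clm_comp (hΦsmooth.contDiffAt (hUopen.mem_nhds hx))).contDiffWithinAt)
  have hθdiff : ∀ x ∈ U, HasFDerivAt θ (fderiv ℝ θ x) x := fun x hx =>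
    ((hθsmooth.contDiffAt (hUopen.mem_nhds hx)).differentiableAt hone).hasFDerivAt
  have hediff : ∀ x ∈ U, HasFDerivAt e (fderiv ℝ e x) x := fun x hx =>
    ((hesmooth.contDiffAt (hUopen.mem_nhds hx)).differentiableAt hone).hasFDerivAt
  have hsym : ∀ x ∈ U, ∀ v w, fderiv ℝ θ x v w = fderiv ℝ θ x w v := by
    intro x hx v w
    have hθw : ∀ w, HasFDerivAt (fun y => θ y w) ((fderiv ℝ θ x).flip w) x := by
      intro w
      have h := (hθdiff x hx).clm_apply (hasFDerivAt_const w x)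
      simpa using h
    have hDΦ : ∀ w, fderiv ℝ (fun y => Φ y w) x =
        (e x).comp ((fderiv ℝ θ x).flip w) + (fderiv ℝ e x).flip (θ x w) := by
      intro w
      have hev : (fun y => e y (θ y w)) =ᶠ[nhds x] (fun y => Φ y w) := by
        filter_upwards [hUopen.mem_nhds hx] with y hy
        exact heθ' y hy w
      rw [← hev.fderiv_eq]
      have h2 := (hediff x hx).clm_apply (hθw w)
      rw [h2.fderiv]
    have hpar : ∀ u, fderiv ℝ e x u = -(A x u).comp (e x) := fun u =>
      eq_neg_of_add_eq_zero_left (hepar x hx u)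
    have h := htf x hx v w
    rw [hDΦ w, hDΦ v] at h
    simp only [ContinuousLinearMap.add_apply, ContinuousLinearMap.coe_comp',
      Function.comp_apply, ContinuousLinearMap.flip_apply] at h
    rw [hpar v, hpar w] at h
    simp only [ContinuousLinearMap.neg_apply, ContinuousLinearMap.coe_comp',
      Function.comp_apply, heθ' x hx] at h
    have hkey : e x (fderiv ℝ θ x v w) = e x (fderiv ℝ θ x w v) := by
      simpa using h
    exact (hebij x hx).injective hkey
  obtain ⟨f, hfsmooth, hfderiv⟩ := poincare1 hUopen hUconv θ hθsmooth hsym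
  refine ⟨f, hfsmooth, ?_, ?_⟩
  · intro x hx
    rw [(hfderiv x hx).fderiv]
    exact heθ x hx
  · intro hinj x hx
    rw [(hfderiv x hx).fderiv]
    have hu := Ring.inverse_unit (hunit x hx).unit
    rw [IsUnit.unit_spec] at hu
    have hinv_bij : Function.Bijective ⇑(Ring.inverse (e x)) := by
      rw [hu]
      exact ContinuousLinearMap.isUnit_iff_bijective.mp (hunit x hx).unit⁻¹.isUnit
    intro a b hab
    have hab' : Ring.inverse (e x) (Φ x a) = Ring.inverse (e x) (Φ x b) := hab
    exact hinj x hx (hinv_bij.injective hab')
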